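/- Fix τ > 0 and σ₀ ∈ ℝ, and set D(θ₀) = τ²θ₀² − sin²(τθ₀). As θ₀ → 0 with θ₀ ≠ 0, the four functions a₁(θ₀) = −2σ₀ − 2θ₀(τθ₀ − sin(τθ₀)cos(τθ₀))/D(θ₀), a₀(θ₀) = σ₀² + 2σ₀θ₀(τθ₀ − sin(τθ₀)cos(τθ₀))/D(θ₀) + θ₀²(τ²θ₀² + sin²(τθ₀))/D(θ₀), α₁(θ₀) = 2θ₀e^{σ₀τ}(τθ₀cos(τθ₀) − sin(τθ₀))/D(θ₀), and α₀(θ₀) = 2θ₀e^{σ₀τ}(σ₀(sin(τθ₀) − τθ₀cos(τθ₀)) − τθ₀²sin(τθ₀))/D(θ₀) converge respectively to −4/τ − 2σ₀, 6/τ² + 4σ₀/τ + σ₀², −(2/τ)e^{σ₀τ}, and (2/τ)e^{σ₀τ}(σ₀ − 3/τ). -/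

import Mathlib

open Filter Topology

/-- As θ₀ → 0 with θ₀ ≠ 0, the four coefficient functions converge to the
corresponding coefficients of the real-root-of-multiplicity-4 case. -/

private lemma lim_sin : Tendsto (fun x : ℝ => Real.sin x / x) (𝓝[≠] 0) (𝓝 1) := by
  have h := (Real.hasDerivAt_sin 0)
  rw [hasDerivAt_iff_tendsto_slope] at h
  simp only [Real.cos_zero] at h
  exact h.congr fun x => by simp [slope_def_field]

private lemma lim_cos : Tendsto (fun x : ℝ => (1 - Real.cos x) / x ^ 2) (𝓝[≠] 0) (𝓝 (1/2)) := by
  apply HasDerivAt.lhopital_zero_nhdsNE (f' := fun x => Real.sin x) (g' := fun x => 2 * x)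
  · filter_upwards with x
    have h : HasDerivAt (fun y : ℝ => 1 - Real.cos y) (0 - -Real.sin x) x :=
      (hasDerivAt_const x (1:ℝ)).sub (Real.hasDerivAt_cos x)
    simpa using h
  · filter_upwards with x
    simpa [mul_comm] using hasDerivAt_pow 2 x
  · filter_upwards [self_mem_nhdsWithin] with x hx
    simp only [Set.mem_compl_iff, Set.mem_singleton_iff] at hx
    positivity
  · have : Tendsto (fun x : ℝ => 1 - Real.cos x) (𝓝 0) (𝓝 0) := by
      have := (Real.continuous_cos.tendsto 0)
      simpa using (tendsto_const_nhds (x := (1:ℝ))).sub this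
    exact this.mono_left nhdsWithin_le_nhds
  · have : Tendsto (fun x : ℝ => x ^ 2) (𝓝 (0:ℝ)) (𝓝 0) := by
      simpa using (continuous_pow 2).tendsto (0:ℝ)
    exact this.mono_left nhdsWithin_le_nhds
  · exact (lim_sin.div_const 2).congr fun x => by ring

private lemma lim_cube : Tendsto (fun x : ℝ => (x - Real.sin x) / x ^ 3) (𝓝[≠] 0) (𝓝 (1/6)) := by
  apply HasDerivAt.lhopital_zero_nhdsNE (f' := fun x => 1 - Real.cos x) (g' := fun x => 3 * x ^ 2)
  · filter_upwards with x
    exact (hasDerivAt_id x).sub (Real.hasDerivAt_sin x)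
  · filter_upwards with x
    simpa using hasDerivAt_pow 3 x
  · filter_upwards [self_mem_nhdsWithin] with x hx
    simp only [Set.mem_compl_iff, Set.mem_singleton_iff] at hx
    positivity
  · have : Tendsto (fun x : ℝ => x - Real.sin x) (𝓝 0) (𝓝 0) := by
      have h : Tendsto (fun x : ℝ => x - Real.sin x) (𝓝 0) (𝓝 (0 - Real.sin 0)) :=
        (continuous_id.sub Real.continuous_sin).tendsto 0
      simpa using h
    exact this.mono_left nhdsWithin_le_nhds
  · have : Tendsto (fun x : ℝ => x ^ 3) (𝓝 (0:ℝ)) (𝓝 0) := by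
      simpa using (continuous_pow 3).tendsto (0:ℝ)
    exact this.mono_left nhdsWithin_le_nhds
  · have h := (lim_cos.div_const 3).congr (fun x : ℝ => show (1 - Real.cos x)/x^2/3 = (1 - Real.cos x)/(3*x^2) by ring)
    convert h using 2
    norm_num

private lemma lim_G : Tendsto (fun x : ℝ => (x ^ 2 - Real.sin x ^ 2) / x ^ 4) (𝓝[≠] 0)
    (𝓝 (1/3)) := by
  have h := lim_cube.mul ((tendsto_const_nhds (x := (1:ℝ))).add lim_sin)
  have h2 : Tendsto (fun x : ℝ => (x - Real.sin x) / x ^ 3 * (1 + Real.sin x / x)) (𝓝[≠] 0)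
      (𝓝 (1/3)) := by
    convert h using 2
    norm_num
  refine h2.congr' ?_
  filter_upwards [self_mem_nhdsWithin] with x hx
  simp only [Set.mem_compl_iff, Set.mem_singleton_iff] at hx
  field_simp
  ring

private lemma mapMulNe (τ : ℝ) (hτ : τ ≠ 0) :
    Tendsto (fun θ : ℝ => τ * θ) (𝓝[≠] (0:ℝ)) (𝓝[≠] 0) := by
  rw [tendsto_nhdsWithin_iff]
  constructor
  · have : Tendsto (fun θ : ℝ => τ * θ) (𝓝 0) (𝓝 (τ * 0)) :=
      (continuous_const.mul continuous_id).tendsto 0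
    simpa using this.mono_left nhdsWithin_le_nhds
  · filter_upwards [self_mem_nhdsWithin] with x hx
    simp only [Set.mem_compl_iff, Set.mem_singleton_iff] at hx ⊢
    exact mul_ne_zero hτ hx

private lemma lim_N1 : Tendsto (fun x : ℝ => (x - Real.sin x * Real.cos x) / x ^ 3) (𝓝[≠] 0)
    (𝓝 (2/3)) := by
  have h := (lim_cube.comp (mapMulNe 2 two_ne_zero)).const_mul 4
  have h2 : Tendsto (fun x : ℝ => 4 * ((2 * x - Real.sin (2 * x)) / (2 * x) ^ 3)) (𝓝[≠] 0)
      (𝓝 (2/3)) := by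
    convert h using 2
    · norm_num
    · norm_num
  refine h2.congr' ?_
  filter_upwards [self_mem_nhdsWithin] with x hx
  simp only [Set.mem_compl_iff, Set.mem_singleton_iff] at hx
  rw [Real.sin_two_mul]
  field_simp
  ring

private lemma lim_N2 : Tendsto (fun x : ℝ => (x * Real.cos x - Real.sin x) / x ^ 3) (𝓝[≠] 0)
    (𝓝 (-(1/3))) := by
  have h := lim_cube.sub lim_cos
  have h2 : Tendsto (fun x : ℝ => (x - Real.sin x) / x ^ 3 - (1 - Real.cos x) / x ^ 2) (𝓝[≠] 0)
      (𝓝 (-(1/3))) := by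
    convert h using 2
    norm_num
  refine h2.congr' ?_
  filter_upwards [self_mem_nhdsWithin] with x hx
  simp only [Set.mem_compl_iff, Set.mem_singleton_iff] at hx
  field_simp
  ring

/-- Key: if N x / x³ → c, then θ·N(τθ)/(τ²θ² - sin²(τθ)) → 3c/τ. -/
private lemma key (τ : ℝ) (hτ : 0 < τ) (N : ℝ → ℝ) (c : ℝ)
    (hN : Tendsto (fun x : ℝ => N x / x ^ 3) (𝓝[≠] 0) (𝓝 c)) :
    Tendsto (fun θ : ℝ => θ * N (τ * θ) / (τ ^ 2 * θ ^ 2 - Real.sin (τ * θ) ^ 2)) (𝓝[≠] 0)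
      (𝓝 (3 * c / τ)) := by
  have hm := mapMulNe τ hτ.ne'
  have h := ((hN.comp hm).div (lim_G.comp hm) (by norm_num)).const_mul (1/τ)
  have h2 : Tendsto (fun θ : ℝ => 1 / τ *
      ((N (τ * θ) / (τ * θ) ^ 3) / (((τ * θ) ^ 2 - Real.sin (τ * θ) ^ 2) / (τ * θ) ^ 4)))
      (𝓝[≠] 0) (𝓝 (3 * c / τ)) := by
    convert h using 2
    · simp only [Function.comp_apply, Pi.div_apply]
    · field_simp
  refine h2.congr' ?_
  filter_upwards [self_mem_nhdsWithin] with θ hθ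
  simp only [Set.mem_compl_iff, Set.mem_singleton_iff] at hθ
  have hx : τ * θ ≠ 0 := mul_ne_zero hτ.ne' hθ
  rcases eq_or_ne (τ ^ 2 * θ ^ 2 - Real.sin (τ * θ) ^ 2) 0 with hDD | hDD
  · have hDD' : (τ * θ) ^ 2 - Real.sin (τ * θ) ^ 2 = 0 := by rw [mul_pow]; exact hDD
    simp [hDD, hDD']
  · have hDD' : (τ * θ) ^ 2 - Real.sin (τ * θ) ^ 2 ≠ 0 := by rw [mul_pow]; exact hDD
    field_simp

private lemma lim_N3 : Tendsto (fun x : ℝ => x * (x ^ 2 + Real.sin x ^ 2) / x ^ 3) (𝓝[≠] 0)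
    (𝓝 2) := by
  have h := (tendsto_const_nhds (x := (1:ℝ))).add (lim_sin.mul lim_sin)
  have h2 : Tendsto (fun x : ℝ => 1 + Real.sin x / x * (Real.sin x / x)) (𝓝[≠] 0) (𝓝 2) := by
    convert h using 2
    norm_num
  refine h2.congr' ?_
  filter_upwards [self_mem_nhdsWithin] with x hx
  simp only [Set.mem_compl_iff, Set.mem_singleton_iff] at hx
  field_simp

private lemma lim_N4 (σ₀ τ : ℝ) (hτ : τ ≠ 0) :
    Tendsto (fun x : ℝ => (σ₀ * (Real.sin x - x * Real.cos x) - x ^ 2 / τ * Real.sin x) / x ^ 3)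
      (𝓝[≠] 0) (𝓝 (σ₀ / 3 - 1 / τ)) := by
  have h := (lim_N2.const_mul (-σ₀)).sub (lim_sin.const_mul (1/τ))
  have h2 : Tendsto (fun x : ℝ => -σ₀ * ((x * Real.cos x - Real.sin x) / x ^ 3)
      - 1 / τ * (Real.sin x / x)) (𝓝[≠] 0) (𝓝 (σ₀ / 3 - 1 / τ)) := by
    convert h using 2
    ring
  refine h2.congr' ?_
  filter_upwards [self_mem_nhdsWithin] with x hx
  simp only [Set.mem_compl_iff, Set.mem_singleton_iff] at hx
  field_simp
  ring

theorem coefficient_functions_limit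
    (τ σ₀ : ℝ) (hτ : 0 < τ)
    (D a₁ a₀ α₁ α₀ : ℝ → ℝ)
    (hD : ∀ θ₀ : ℝ, D θ₀ = τ ^ 2 * θ₀ ^ 2 - Real.sin (τ * θ₀) ^ 2)
    (ha₁ : ∀ θ₀ : ℝ, a₁ θ₀ = -2 * σ₀
      - 2 * θ₀ * (τ * θ₀ - Real.sin (τ * θ₀) * Real.cos (τ * θ₀)) / D θ₀)
    (ha₀ : ∀ θ₀ : ℝ, a₀ θ₀ = σ₀ ^ 2
      + 2 * σ₀ * θ₀ * (τ * θ₀ - Real.sin (τ * θ₀) * Real.cos (τ * θ₀)) / D θ₀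
      + θ₀ ^ 2 * (τ ^ 2 * θ₀ ^ 2 + Real.sin (τ * θ₀) ^ 2) / D θ₀)
    (hα₁ : ∀ θ₀ : ℝ, α₁ θ₀ = 2 * θ₀ * Real.exp (σ₀ * τ) *
      (τ * θ₀ * Real.cos (τ * θ₀) - Real.sin (τ * θ₀)) / D θ₀)
    (hα₀ : ∀ θ₀ : ℝ, α₀ θ₀ = 2 * θ₀ * Real.exp (σ₀ * τ) *
      (σ₀ * (Real.sin (τ * θ₀) - τ * θ₀ * Real.cos (τ * θ₀))
        - τ * θ₀ ^ 2 * Real.sin (τ * θ₀)) / D θ₀) :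
    Tendsto a₁ (𝓝[≠] 0) (𝓝 (-4 / τ - 2 * σ₀)) ∧
    Tendsto a₀ (𝓝[≠] 0) (𝓝 (6 / τ ^ 2 + 4 * σ₀ / τ + σ₀ ^ 2)) ∧
    Tendsto α₁ (𝓝[≠] 0) (𝓝 (-(2 / τ) * Real.exp (σ₀ * τ))) ∧
    Tendsto α₀ (𝓝[≠] 0) (𝓝 ((2 / τ) * Real.exp (σ₀ * τ) * (σ₀ - 3 / τ))) := by
  have hτ' : τ ≠ 0 := hτ.ne'
  have T1 := key τ hτ (fun x => x - Real.sin x * Real.cos x) (2/3) lim_N1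
  have T2 := key τ hτ (fun x => x * Real.cos x - Real.sin x) (-(1/3)) lim_N2
  have T3 := key τ hτ (fun x => x * (x ^ 2 + Real.sin x ^ 2)) 2 lim_N3
  have T4 := key τ hτ (fun x => σ₀ * (Real.sin x - x * Real.cos x) - x ^ 2 / τ * Real.sin x)
    (σ₀ / 3 - 1 / τ) (lim_N4 σ₀ τ hτ')
  refine ⟨?_, ?_, ?_, ?_⟩
  · have h := (tendsto_const_nhds (x := -2*σ₀)).sub (T1.const_mul 2)
    have h2 : Tendsto (fun θ : ℝ => -2*σ₀ - 2 * (θ * (τ * θ - Real.sin (τ * θ) * Real.cos (τ * θ))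
        / (τ ^ 2 * θ ^ 2 - Real.sin (τ * θ) ^ 2))) (𝓝[≠] 0) (𝓝 (-4 / τ - 2 * σ₀)) := by
      convert h using 2
      field_simp
      ring
    exact h2.congr fun θ => by rw [ha₁, hD]; ring
  · have h := ((tendsto_const_nhds (x := σ₀^2)).add (T1.const_mul (2*σ₀))).add (T3.const_mul (1/τ))
    have h2 : Tendsto (fun θ : ℝ => σ₀ ^ 2
        + 2 * σ₀ * (θ * (τ * θ - Real.sin (τ * θ) * Real.cos (τ * θ))
          / (τ ^ 2 * θ ^ 2 - Real.sin (τ * θ) ^ 2))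
        + 1 / τ * (θ * (τ * θ * ((τ * θ) ^ 2 + Real.sin (τ * θ) ^ 2))
          / (τ ^ 2 * θ ^ 2 - Real.sin (τ * θ) ^ 2)))
        (𝓝[≠] 0) (𝓝 (6 / τ ^ 2 + 4 * σ₀ / τ + σ₀ ^ 2)) := by
      convert h using 2
      field_simp
      ring
    refine h2.congr fun θ => ?_
    rw [ha₀, hD]
    rcases eq_or_ne (τ ^ 2 * θ ^ 2 - Real.sin (τ * θ) ^ 2) 0 with hDD | hDD
    · rw [hDD]; simp
    · field_simp
  · have h := T2.const_mul (2 * Real.exp (σ₀ * τ))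
    have h2 : Tendsto (fun θ : ℝ => 2 * Real.exp (σ₀ * τ)
        * (θ * (τ * θ * Real.cos (τ * θ) - Real.sin (τ * θ))
          / (τ ^ 2 * θ ^ 2 - Real.sin (τ * θ) ^ 2)))
        (𝓝[≠] 0) (𝓝 (-(2 / τ) * Real.exp (σ₀ * τ))) := by
      convert h using 2
      field_simp
    exact h2.congr fun θ => by rw [hα₁, hD]; ring
  · have h := T4.const_mul (2 * Real.exp (σ₀ * τ))
    have h2 : Tendsto (fun θ : ℝ => 2 * Real.exp (σ₀ * τ)
        * (θ * (σ₀ * (Real.sin (τ * θ) - τ * θ * Real.cos (τ * θ))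
            - (τ * θ) ^ 2 / τ * Real.sin (τ * θ))
          / (τ ^ 2 * θ ^ 2 - Real.sin (τ * θ) ^ 2)))
        (𝓝[≠] 0) (𝓝 ((2 / τ) * Real.exp (σ₀ * τ) * (σ₀ - 3 / τ))) := by
      convert h using 2
      field_simp
    refine h2.congr fun θ => ?_
    rw [hα₀, hD]
    rcases eq_or_ne (τ ^ 2 * θ ^ 2 - Real.sin (τ * θ) ^ 2) 0 with hDD | hDD
    · rw [hDD]; simp
    · field_simp
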